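/- State-argument integral limit of the shape-derivative splitting: Let Ω ⊆ ℝ^d be a bounded open set with λ^d(∂Ω) = 0, V : ℝ^d → ℝ^d an admissible distortion, ũ : ℝ^d → ℝ of class C², and ψ : ℝ^d × ℝ → ℝ of class C¹. Then lim_{ε→0} (1/ε) ∫_{Ω_ε} [ψ(x, ũ(x)) − ψ(x, ũ(x + εV(x)))] · |det(I_d + ε DV(x))| dλ^d(x) = − ∫_Ω ∂_u ψ(x, ũ(x)) · ⟨∇ũ(x), V(x)⟩ dλ^d(x), where ∂_u ψ denotes the partial derivative of ψ with respect to its second (scalar) argument. -/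

import Mathlib

open Filter MeasureTheory RealInnerProductSpace Set

theorem aux_hasDerivAt {d : ℕ} (V : EuclideanSpace ℝ (Fin d) → EuclideanSpace ℝ (Fin d))
    (u : EuclideanSpace ℝ (Fin d) → ℝ) (hu : ContDiff ℝ 2 u)
    (ψ : EuclideanSpace ℝ (Fin d) × ℝ → ℝ) (hψ : ContDiff ℝ 1 ψ)
    (x : EuclideanSpace ℝ (Fin d)) :
    HasDerivAt (fun ε : ℝ => ψ (x, u (x + ε • V x)))
      (deriv (fun v : ℝ => ψ (x, v)) (u x) * ⟪gradient u x, V x⟫) 0 := by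
  have h1 : HasDerivAt (fun ε : ℝ => x + ε • V x) (V x) 0 := by
    simpa using ((hasDerivAt_id (0:ℝ)).smul_const (V x)).const_add x
  have hux : HasFDerivAt u (fderiv ℝ u x) (x + (0:ℝ) • V x) := by
    simpa using (hu.differentiable two_ne_zero).differentiableAt.hasFDerivAt
  have h2 : HasDerivAt (fun ε : ℝ => u (x + ε • V x)) (fderiv ℝ u x (V x)) 0 :=
    hux.comp_hasDerivAt 0 h1
  have h3 : HasDerivAt (fun ε : ℝ => ((x : EuclideanSpace ℝ (Fin d)), u (x + ε • V x)))
      ((0 : EuclideanSpace ℝ (Fin d)), fderiv ℝ u x (V x)) 0 :=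
    HasDerivAt.prodMk (hasDerivAt_const (0:ℝ) x) h2
  have hψx : HasFDerivAt ψ (fderiv ℝ ψ (x, u x)) ((x, u (x + (0:ℝ) • V x))) := by
    simpa using (hψ.differentiable one_ne_zero).differentiableAt.hasFDerivAt
  have h4 : HasDerivAt (fun ε : ℝ => ψ (x, u (x + ε • V x)))
      (fderiv ℝ ψ (x, u x) ((0 : EuclideanSpace ℝ (Fin d)), fderiv ℝ u x (V x))) 0 :=
    hψx.comp_hasDerivAt 0 h3
  have h5 : HasDerivAt (fun v : ℝ => ψ (x, v))
      (fderiv ℝ ψ (x, u x) ((0 : EuclideanSpace ℝ (Fin d)), 1)) (u x) :=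
    (hψ.differentiable one_ne_zero).differentiableAt.hasFDerivAt.comp_hasDerivAt (u x)
      (HasDerivAt.prodMk (hasDerivAt_const (u x) x) (hasDerivAt_id (u x)))
  have hgrad : ⟪gradient u x, V x⟫ = fderiv ℝ u x (V x) :=
    InnerProductSpace.toDual_symm_apply
  have hval : fderiv ℝ ψ (x, u x) ((0 : EuclideanSpace ℝ (Fin d)), fderiv ℝ u x (V x))
      = fderiv ℝ ψ (x, u x) ((0 : EuclideanSpace ℝ (Fin d)), 1) * fderiv ℝ u x (V x) := by
    have : ((0 : EuclideanSpace ℝ (Fin d)), fderiv ℝ u x (V x))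
        = (fderiv ℝ u x (V x)) • ((0 : EuclideanSpace ℝ (Fin d)), (1:ℝ)) := by
      simp [Prod.smul_mk]
    rw [this, (fderiv ℝ ψ (x, u x)).map_smul, smul_eq_mul, mul_comm]
  rw [h5.deriv, hgrad, ← hval]
  exact h4

theorem aux_tendsto {d : ℕ} (V : EuclideanSpace ℝ (Fin d) → EuclideanSpace ℝ (Fin d))
    (hV : ContDiff ℝ 2 V)
    (u : EuclideanSpace ℝ (Fin d) → ℝ) (hu : ContDiff ℝ 2 u)
    (ψ : EuclideanSpace ℝ (Fin d) × ℝ → ℝ) (hψ : ContDiff ℝ 1 ψ)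
    (x : EuclideanSpace ℝ (Fin d)) :
    Tendsto (fun ε : ℝ => (1 / ε) * ((ψ (x, u x) - ψ (x, u (x + ε • V x))) *
        |ContinuousLinearMap.det
          (ContinuousLinearMap.id ℝ (EuclideanSpace ℝ (Fin d)) + ε • fderiv ℝ V x)|))
      (nhdsWithin 0 {0}ᶜ)
      (nhds (-(deriv (fun v : ℝ => ψ (x, v)) (u x) * ⟪gradient u x, V x⟫))) := by
  set φ : ℝ → ℝ := fun ε => ψ (x, u (x + ε • V x)) with hφ
  set m : ℝ := deriv (fun v : ℝ => ψ (x, v)) (u x) * ⟪gradient u x, V x⟫ with hm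
  have hslope : Tendsto (slope φ 0) (nhdsWithin 0 {0}ᶜ) (nhds m) :=
    hasDerivAt_iff_tendsto_slope.mp (aux_hasDerivAt V u hu ψ hψ x)
  have hdetc : Continuous (fun ε : ℝ => |ContinuousLinearMap.det
      (ContinuousLinearMap.id ℝ (EuclideanSpace ℝ (Fin d)) + ε • fderiv ℝ V x)|) := by
    exact (ContinuousLinearMap.continuous_det.comp
      (continuous_const.add ((continuous_id.smul continuous_const)))).abs
  have hdet1 : |ContinuousLinearMap.det
      (ContinuousLinearMap.id ℝ (EuclideanSpace ℝ (Fin d)) + (0:ℝ) • fderiv ℝ V x)| = 1 := by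
    simp [ContinuousLinearMap.det]
  have hdet : Tendsto (fun ε : ℝ => |ContinuousLinearMap.det
      (ContinuousLinearMap.id ℝ (EuclideanSpace ℝ (Fin d)) + ε • fderiv ℝ V x)|)
      (nhdsWithin 0 {0}ᶜ) (nhds 1) := by
    have := hdetc.tendsto 0
    rw [hdet1] at this
    exact this.mono_left nhdsWithin_le_nhds
  have hcomb := (hslope.neg.mul hdet)
  rw [neg_mul, mul_one] at hcomb
  refine hcomb.congr' ?_
  refine eventuallyEq_of_mem self_mem_nhdsWithin fun ε (hε : ε ∈ ({0}ᶜ : Set ℝ)) => ?_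
  have hε0 : ε ≠ 0 := hε
  have hφ0 : φ 0 = ψ (x, u x) := by simp [hφ]
  rw [slope_def_field, hφ0]
  field_simp
  simp only [hφ, sub_zero]
  ring

set_option maxHeartbeats 1600000 in
/-- State-argument integral limit of the shape-derivative splitting. -/
theorem state_argument_integral_limit
    {d : ℕ} (Ω : Set (EuclideanSpace ℝ (Fin d)))
    (hΩ_open : IsOpen Ω) (hΩ_bdd : Bornology.IsBounded Ω)
    (hfrontier : volume (frontier Ω) = 0)
    (V : EuclideanSpace ℝ (Fin d) → EuclideanSpace ℝ (Fin d))
    (hV : ContDiff ℝ 2 V) (hVbdd : ∃ M : ℝ, ∀ x, ‖V x‖ ≤ M)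
    (u : EuclideanSpace ℝ (Fin d) → ℝ) (hu : ContDiff ℝ 2 u)
    (ψ : EuclideanSpace ℝ (Fin d) × ℝ → ℝ) (hψ : ContDiff ℝ 1 ψ) :
    Tendsto (fun ε : ℝ =>
        (1 / ε) * ∫ x in {y | y + ε • V y ∈ Ω},
          (ψ (x, u x) - ψ (x, u (x + ε • V x))) *
            |ContinuousLinearMap.det
              (ContinuousLinearMap.id ℝ (EuclideanSpace ℝ (Fin d)) + ε • fderiv ℝ V x)|)
      (nhdsWithin 0 {0}ᶜ)
      (nhds (- ∫ x in Ω, deriv (fun v : ℝ => ψ (x, v)) (u x) * ⟪gradient u x, V x⟫)) := by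
  classical
  obtain ⟨M₀, hM₀⟩ := hVbdd
  set M : ℝ := max M₀ 0 with hMdef
  have hM : ∀ x, ‖V x‖ ≤ M := fun x => le_trans (hM₀ x) (le_max_left _ _)
  have hM0 : (0:ℝ) ≤ M := le_max_right _ _
  obtain ⟨R₀, hR₀⟩ := hΩ_bdd.subset_closedBall 0
  set R : ℝ := max R₀ 0 with hRdef
  have hR : Ω ⊆ Metric.closedBall 0 R :=
    hR₀.trans (Metric.closedBall_subset_closedBall (le_max_left _ _))
  have hR0 : (0:ℝ) ≤ R := le_max_right _ _
  set K : Set (EuclideanSpace ℝ (Fin d)) := Metric.closedBall 0 (R + M) with hKdef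
  have hKcompact : IsCompact K := isCompact_closedBall _ _
  have hΩK : Ω ⊆ K :=
    hR.trans (Metric.closedBall_subset_closedBall (by linarith))
  obtain ⟨A₀, hA₀⟩ := hKcompact.exists_bound_of_continuousOn hu.continuous.continuousOn
  set A : ℝ := max A₀ 0 with hAdef
  have hA : ∀ y ∈ K, u y ∈ Set.Icc (-A) A := by
    intro y hy
    have h1 : |u y| ≤ A₀ := by simpa [Real.norm_eq_abs] using hA₀ y hy
    rw [abs_le] at h1
    constructor
    · have := le_max_left A₀ 0; simp only [hAdef]; linarith [h1.1]
    · exact h1.2.trans (le_max_left _ _)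
  set L : Set ((EuclideanSpace ℝ (Fin d)) × ℝ) := K ×ˢ Set.Icc (-A) A with hLdef
  have hLcompact : IsCompact L := hKcompact.prod isCompact_Icc
  have hLconvex : Convex ℝ L := (convex_closedBall _ _).prod (convex_Icc _ _)
  obtain ⟨Cψ₀, hCψ₀⟩ :=
    hLcompact.exists_bound_of_continuousOn (hψ.continuous_fderiv one_ne_zero).continuousOn
  set Cψ : ℝ := max Cψ₀ 0 with hCψdef
  have hCψ0 : (0:ℝ) ≤ Cψ := le_max_right _ _
  obtain ⟨Cu₀, hCu₀⟩ :=
    hKcompact.exists_bound_of_continuousOn (hu.continuous_fderiv two_ne_zero).continuousOn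
  set Cu : ℝ := max Cu₀ 0 with hCudef
  have hCu0 : (0:ℝ) ≤ Cu := le_max_right _ _
  have hdetcont : Continuous (fun p : ℝ × EuclideanSpace ℝ (Fin d) =>
      |ContinuousLinearMap.det
        (ContinuousLinearMap.id ℝ (EuclideanSpace ℝ (Fin d)) + p.1 • fderiv ℝ V p.2)|) :=
    (ContinuousLinearMap.continuous_det.comp (continuous_const.add
      (continuous_fst.smul ((hV.continuous_fderiv two_ne_zero).comp continuous_snd)))).abs
  obtain ⟨D₀, hD₀⟩ := ((isCompact_Icc (a := (-1:ℝ)) (b := 1)).prod hKcompact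
    ).exists_bound_of_continuousOn hdetcont.continuousOn
  set D : ℝ := max D₀ 0 with hDdef
  have hD0 : (0:ℝ) ≤ D := le_max_right _ _
  set C : ℝ := Cψ * (Cu * M) * D with hCdef
  have hC0 : (0:ℝ) ≤ C := mul_nonneg (mul_nonneg hCψ0 (mul_nonneg hCu0 hM0)) hD0
  set F : ℝ → EuclideanSpace ℝ (Fin d) → ℝ := fun ε => Set.indicator {y | y + ε • V y ∈ Ω}
      (fun x => (1/ε) * ((ψ (x, u x) - ψ (x, u (x + ε • V x))) *
        |ContinuousLinearMap.det
          (ContinuousLinearMap.id ℝ (EuclideanSpace ℝ (Fin d)) + ε • fderiv ℝ V x)|)) with hFdef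
  have hSopen : ∀ ε : ℝ, IsOpen {y | y + ε • V y ∈ Ω} := fun ε =>
    hΩ_open.preimage (continuous_id.add (hV.continuous.const_smul ε))
  have hSK : ∀ ε : ℝ, |ε| ≤ 1 → {y | y + ε • V y ∈ Ω} ⊆ K := by
    intro ε hε y hy
    have h1 : ‖y + ε • V y‖ ≤ R := by
      have := hR hy
      simpa [Metric.mem_closedBall, dist_zero_right] using this
    have h2 : ‖y‖ ≤ ‖y + ε • V y‖ + ‖ε • V y‖ := by
      calc ‖y‖ = ‖(y + ε • V y) - ε • V y‖ := by congr 1; abel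
        _ ≤ ‖y + ε • V y‖ + ‖ε • V y‖ := norm_sub_le _ _
    have h3 : ‖ε • V y‖ ≤ M := by
      rw [norm_smul]
      calc ‖ε‖ * ‖V y‖ ≤ 1 * M := by
            apply mul_le_mul (by simpa using hε) (hM y) (norm_nonneg _) zero_le_one
        _ = M := one_mul M
    simp only [hKdef, Metric.mem_closedBall, dist_zero_right]
    linarith
  have hGcont : ∀ ε : ℝ, Continuous (fun x : EuclideanSpace ℝ (Fin d) =>
      (1/ε) * ((ψ (x, u x) - ψ (x, u (x + ε • V x))) *
        |ContinuousLinearMap.det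
          (ContinuousLinearMap.id ℝ (EuclideanSpace ℝ (Fin d)) + ε • fderiv ℝ V x)|)) := by
    intro ε
    apply continuous_const.mul
    apply Continuous.mul
    · exact (hψ.continuous.comp (continuous_id.prodMk hu.continuous)).sub
        (hψ.continuous.comp (continuous_id.prodMk (hu.continuous.comp
          (continuous_id.add (hV.continuous.const_smul ε)))))
    · exact (ContinuousLinearMap.continuous_det.comp (continuous_const.add
        ((hV.continuous_fderiv two_ne_zero).const_smul ε))).abs
  have hmain : Tendsto (fun ε : ℝ => ∫ x, F ε x) (nhdsWithin 0 {0}ᶜ)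
      (nhds (∫ x, Set.indicator Ω (fun x =>
        -(deriv (fun v : ℝ => ψ (x, v)) (u x) * ⟪gradient u x, V x⟫)) x)) := by
    apply tendsto_integral_filter_of_dominated_convergence (Set.indicator K fun _ => C)
    · exact Eventually.of_forall fun ε =>
        ((hGcont ε).aestronglyMeasurable).indicator (hSopen ε).measurableSet
    · have hev1 : ∀ᶠ ε : ℝ in nhdsWithin 0 {0}ᶜ, |ε| ≤ 1 := by
        apply Filter.Eventually.filter_mono nhdsWithin_le_nhds
        have : Metric.closedBall (0:ℝ) 1 ∈ nhds (0:ℝ) :=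
          Metric.closedBall_mem_nhds 0 one_pos
        filter_upwards [this] with ε hε
        simpa [Metric.mem_closedBall, Real.dist_eq] using hε
      have hev2 : ∀ᶠ ε : ℝ in nhdsWithin 0 {0}ᶜ, ε ≠ 0 := self_mem_nhdsWithin
      filter_upwards [hev1, hev2] with ε hε1 hε0
      apply ae_of_all
      intro x
      by_cases hx : x ∈ {y | y + ε • V y ∈ Ω}
      · rw [hFdef]
        simp only
        rw [Set.indicator_of_mem hx]
        have hxK : x ∈ K := hSK ε hε1 hx
        rw [Set.indicator_of_mem hxK]
        have hxΩ' : x + ε • V x ∈ Ω := hx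
        have hxK' : x + ε • V x ∈ K := hΩK hxΩ'
        have hpt1 : (x, u x) ∈ L := ⟨hxK, hA _ hxK⟩
        have hpt2 : (x, u (x + ε • V x)) ∈ L := ⟨hxK, hA _ hxK'⟩
        have hψdiff : |ψ (x, u x) - ψ (x, u (x + ε • V x))|
            ≤ Cψ * |u x - u (x + ε • V x)| := by
          have h := hLconvex.norm_image_sub_le_of_norm_fderiv_le
            (f := ψ) (C := Cψ) (fun p _ => (hψ.differentiable one_ne_zero).differentiableAt)
            (fun p hp => le_trans (hCψ₀ p hp) (le_max_left _ _)) hpt2 hpt1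
          have hnorm : ‖((x, u x) : (EuclideanSpace ℝ (Fin d)) × ℝ) - (x, u (x + ε • V x))‖
              = |u x - u (x + ε • V x)| := by
            have heq2 : ((x, u x) : (EuclideanSpace ℝ (Fin d)) × ℝ) - (x, u (x + ε • V x))
                = (0, u x - u (x + ε • V x)) := by
              simp [Prod.ext_iff]
            rw [heq2, Prod.norm_def]
            simp only [norm_zero, Real.norm_eq_abs]
            exact max_eq_right (abs_nonneg _)
          rw [Real.norm_eq_abs, hnorm] at h
          exact h
        have hudiff : |u x - u (x + ε • V x)| ≤ Cu * (|ε| * M) := by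
          have h := (convex_closedBall (0 : EuclideanSpace ℝ (Fin d)) (R + M)
            ).norm_image_sub_le_of_norm_fderiv_le
            (f := u) (C := Cu) (fun p _ => (hu.differentiable two_ne_zero).differentiableAt)
            (fun p hp => le_trans (hCu₀ p hp) (le_max_left _ _)) hxK' hxK
          rw [Real.norm_eq_abs] at h
          calc |u x - u (x + ε • V x)| ≤ Cu * ‖x - (x + ε • V x)‖ := h
            _ = Cu * ‖ε • V x‖ := by
                rw [show x - (x + ε • V x) = -(ε • V x) by abel, norm_neg]
            _ ≤ Cu * (|ε| * M) := by
                rw [norm_smul, Real.norm_eq_abs]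
                exact mul_le_mul_of_nonneg_left
                  (mul_le_mul_of_nonneg_left (hM x) (abs_nonneg _)) hCu0
        have hdetle : |ContinuousLinearMap.det
            (ContinuousLinearMap.id ℝ (EuclideanSpace ℝ (Fin d)) + ε • fderiv ℝ V x)| ≤ D := by
          have hmem : ((ε, x) : ℝ × EuclideanSpace ℝ (Fin d)) ∈ Set.Icc (-1:ℝ) 1 ×ˢ K :=
            ⟨abs_le.mp hε1, hxK⟩
          have := hD₀ (ε, x) hmem
          rw [Real.norm_eq_abs, abs_abs] at this
          exact this.trans (le_max_left _ _)
        have hε' : |ε| ≠ 0 := abs_ne_zero.mpr hε0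
        have h1 : |ψ (x, u x) - ψ (x, u (x + ε • V x))| ≤ Cψ * (Cu * (|ε| * M)) :=
          hψdiff.trans (mul_le_mul_of_nonneg_left hudiff hCψ0)
        have h2 : |ψ (x, u x) - ψ (x, u (x + ε • V x))| *
            |ContinuousLinearMap.det
              (ContinuousLinearMap.id ℝ (EuclideanSpace ℝ (Fin d)) + ε • fderiv ℝ V x)|
            ≤ (Cψ * (Cu * (|ε| * M))) * D :=
          mul_le_mul h1 hdetle (abs_nonneg _)
            (mul_nonneg hCψ0 (mul_nonneg hCu0 (mul_nonneg (abs_nonneg _) hM0)))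
        calc ‖(1/ε) * ((ψ (x, u x) - ψ (x, u (x + ε • V x))) *
              |ContinuousLinearMap.det
                (ContinuousLinearMap.id ℝ (EuclideanSpace ℝ (Fin d)) + ε • fderiv ℝ V x)|)‖
            = |1/ε| * (|ψ (x, u x) - ψ (x, u (x + ε • V x))| *
              |ContinuousLinearMap.det
                (ContinuousLinearMap.id ℝ (EuclideanSpace ℝ (Fin d)) + ε • fderiv ℝ V x)|) := by
              rw [Real.norm_eq_abs, abs_mul, abs_mul, abs_abs]
          _ ≤ |1/ε| * ((Cψ * (Cu * (|ε| * M))) * D) :=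
              mul_le_mul_of_nonneg_left h2 (abs_nonneg _)
          _ = C := by
              rw [hCdef, abs_div, abs_one]
              field_simp
      · rw [hFdef]
        simp only
        rw [Set.indicator_of_notMem hx]
        rw [norm_zero]
        exact Set.indicator_nonneg (fun _ _ => hC0) x
    · exact ((integrableOn_const hKcompact.measure_lt_top.ne).integrable_indicator
        measurableSet_closedBall)
    · have hae : ∀ᵐ x : EuclideanSpace ℝ (Fin d), x ∉ frontier Ω :=
        measure_eq_zero_iff_ae_notMem.mp hfrontier
      filter_upwards [hae] with x hxf
      by_cases hxΩ : x ∈ Ω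
      · rw [Set.indicator_of_mem hxΩ]
        refine (aux_tendsto V hV u hu ψ hψ x).congr' ?_
        have hcont : Tendsto (fun ε : ℝ => x + ε • V x) (nhds 0) (nhds x) := by
          have hc : Continuous fun ε : ℝ => x + ε • V x :=
            continuous_const.add (continuous_id.smul continuous_const)
          have := hc.tendsto 0
          simpa using this
        have hev : ∀ᶠ ε : ℝ in nhds 0, x + ε • V x ∈ Ω :=
          hcont.eventually_mem (hΩ_open.mem_nhds hxΩ)
        refine (hev.filter_mono nhdsWithin_le_nhds).mono fun ε hε => ?_
        have hmem : x ∈ {y | y + ε • V y ∈ Ω} := hε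
        simp only [hFdef]
        rw [Set.indicator_of_mem hmem]
      · rw [Set.indicator_of_notMem hxΩ]
        have hxcl : x ∉ closure Ω := by
          intro h
          rcases (closure_eq_interior_union_frontier Ω ▸ h) with h' | h'
          · exact hxΩ (interior_subset h')
          · exact hxf h'
        have hcont : Tendsto (fun ε : ℝ => x + ε • V x) (nhds 0) (nhds x) := by
          have hc : Continuous fun ε : ℝ => x + ε • V x :=
            continuous_const.add (continuous_id.smul continuous_const)
          have := hc.tendsto 0
          simpa using this
        have hev : ∀ᶠ ε : ℝ in nhds 0, x + ε • V x ∈ (closure Ω)ᶜ :=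
          hcont.eventually_mem (isOpen_compl_iff.mpr isClosed_closure |>.mem_nhds hxcl)
        refine Tendsto.congr' ?_ tendsto_const_nhds
        refine (hev.filter_mono nhdsWithin_le_nhds).mono fun ε hε => ?_
        have hmem : x ∉ {y | y + ε • V y ∈ Ω} := fun h => hε (subset_closure h)
        simp only [hFdef]
        rw [Set.indicator_of_notMem hmem]
  have heq : ∀ ε : ℝ, ∫ x, F ε x
      = (1 / ε) * ∫ x in {y | y + ε • V y ∈ Ω},
          (ψ (x, u x) - ψ (x, u (x + ε • V x))) *
            |ContinuousLinearMap.det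
              (ContinuousLinearMap.id ℝ (EuclideanSpace ℝ (Fin d)) + ε • fderiv ℝ V x)| := by
    intro ε
    rw [hFdef]
    simp only
    rw [integral_indicator (hSopen ε).measurableSet, integral_const_mul]
  have htarget : (∫ x, Set.indicator Ω (fun x =>
        -(deriv (fun v : ℝ => ψ (x, v)) (u x) * ⟪gradient u x, V x⟫)) x)
      = - ∫ x in Ω, deriv (fun v : ℝ => ψ (x, v)) (u x) * ⟪gradient u x, V x⟫ := by
    rw [integral_indicator hΩ_open.measurableSet, integral_neg]
  rw [htarget] at hmain
  exact hmain.congr fun ε => heq ε
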